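/- Let m ≥ 1 be an integer and c ∈ Fin m. Then the function α ↦ ∑_{(u,v,w,z) ∈ (Fin m)⁴, u ≠ v, w = z} q_α(u, v, w, z; c, c) tends to 0 as α tends to 0 from the right (along nhdsWithin 0 (Set.Ioi 0)). In words: given that the two units share the same baseline label, the probability that they fail to co-cluster in view 1 but co-cluster in view 2 tends to 0 as α → 0. -/

import Mathlib

/-- Indicator that the triple `(a, b, c)` has all three entries equal. -/
def isA {m : ℕ} (a b c : Fin m) : ℕ :=
  if a = b ∧ b = c then 1 else 0

/-- Indicator that the triple `(a, b, c)` has three pairwise distinct entries. -/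
def isB {m : ℕ} (a b c : Fin m) : ℕ :=
  if a ≠ b ∧ b ≠ c ∧ a ≠ c then 1 else 0

/-- Indicator that the triple `(a, b, c)` has exactly two equal entries. -/
def isC {m : ℕ} (a b c : Fin m) : ℕ :=
  if (a = b ∧ b ≠ c) ∨ (b ≠ c ∧ a = c) ∨ (a ≠ b ∧ b = c) then 1 else 0

/-- The conditional probability `q_α(c₁₁, c₁₂, c₂₁, c₂₂; c₀₁, c₀₂)` of the view
labels of two units in two views given their baseline labels (Proposition 1 of
the paper, `n = J = 2` case).  The triple of unit `i` is `(c₀ᵢ, c₁ᵢ, c₂ᵢ)`. -/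
noncomputable def q (m : ℕ) (α : ℝ) (c11 c12 c21 c22 c01 c02 : Fin m) : ℝ :=
  ((α + 2) * (α + 1)) ^ (isA c01 c11 c21 + isA c02 c12 c22) *
    (α ^ 2) ^ (isB c01 c11 c21 + isB c02 c12 c22) *
    ((α + 1) * α) ^ (isC c01 c11 c21 + isC c02 c12 c22) /
      ((α * m + 2) * (α * m + 1)) ^ 2


lemma eq_of_isB_isC_zero {m : ℕ} (a b c : Fin m) (h1 : isB a b c = 0)
    (h2 : isC a b c = 0) : a = b ∧ b = c := by
  simp only [isB, isC] at h1 h2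
  by_cases hab : a = b <;> by_cases hbc : b = c <;> by_cases hac : a = c <;> simp_all

/-- Corollary 1: given equal baseline labels, the probability of failing to
co-cluster in view 1 while co-clustering in view 2 tends to 0 as `α → 0⁺`. -/
theorem split_cocluster_tendsto_zero_alpha_zero (m : ℕ) (hm : 1 ≤ m) (c : Fin m) :
    Filter.Tendsto (fun α : ℝ =>
        ∑ p ∈ Finset.univ.filter
            (fun p : Fin m × Fin m × Fin m × Fin m =>
              p.1 ≠ p.2.1 ∧ p.2.2.1 = p.2.2.2),
          q m α p.1 p.2.1 p.2.2.1 p.2.2.2 c c)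
      (nhdsWithin 0 (Set.Ioi 0)) (nhds 0) := by
  have h0 : (0:ℝ) = ∑ _p ∈ Finset.univ.filter
      (fun p : Fin m × Fin m × Fin m × Fin m =>
        p.1 ≠ p.2.1 ∧ p.2.2.1 = p.2.2.2), (0:ℝ) := by simp
  rw [h0]
  apply tendsto_finset_sum
  intro p hp
  simp only [Finset.mem_filter, Finset.mem_univ, true_and] at hp
  obtain ⟨hne, heq⟩ := hp
  unfold q
  apply Filter.Tendsto.mono_left _ nhdsWithin_le_nhds
  have hden : Filter.Tendsto (fun α : ℝ => ((α * m + 2) * (α * m + 1)) ^ 2)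
      (nhds 0) (nhds (((0 * (m:ℝ) + 2) * (0 * (m:ℝ) + 1)) ^ 2)) := by
    apply Continuous.tendsto; continuity
  have hcont : Continuous (fun α : ℝ =>
      ((α + 2) * (α + 1)) ^ (isA c p.1 p.2.2.1 + isA c p.2.1 p.2.2.2) *
        (α ^ 2) ^ (isB c p.1 p.2.2.1 + isB c p.2.1 p.2.2.2) *
        ((α + 1) * α) ^ (isC c p.1 p.2.2.1 + isC c p.2.1 p.2.2.2)) := by
    continuity
  have hval : (2:ℝ) ^ (isA c p.1 p.2.2.1 + isA c p.2.1 p.2.2.2) *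
        (0:ℝ) ^ (isB c p.1 p.2.2.1 + isB c p.2.1 p.2.2.2) *
        (0:ℝ) ^ (isC c p.1 p.2.2.1 + isC c p.2.1 p.2.2.2) = 0 := by
    rcases Nat.eq_zero_or_pos (isB c p.1 p.2.2.1 + isB c p.2.1 p.2.2.2) with hB | hB
    · have hC : 0 < isC c p.1 p.2.2.1 + isC c p.2.1 p.2.2.2 := by
        rcases Nat.eq_zero_or_pos (isC c p.1 p.2.2.1 + isC c p.2.1 p.2.2.2) with hC | hC
        · exfalso
          have h1 := eq_of_isB_isC_zero c p.1 p.2.2.1 (by omega) (by omega)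
          have h2 := eq_of_isB_isC_zero c p.2.1 p.2.2.2 (by omega) (by omega)
          exact hne (h1.1.symm.trans h2.1)
        · exact hC
      simp [zero_pow hC.ne']
    · simp [zero_pow hB.ne']
  have hnum : Filter.Tendsto (fun α : ℝ =>
      ((α + 2) * (α + 1)) ^ (isA c p.1 p.2.2.1 + isA c p.2.1 p.2.2.2) *
        (α ^ 2) ^ (isB c p.1 p.2.2.1 + isB c p.2.1 p.2.2.2) *
        ((α + 1) * α) ^ (isC c p.1 p.2.2.1 + isC c p.2.1 p.2.2.2))
      (nhds 0) (nhds 0) := by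
    have := hcont.tendsto 0
    simpa [hval] using this
  have hlim := hnum.div hden (by norm_num)
  simpa [Pi.div_def] using hlim
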